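/- For unit vectors x, y ∈ ℍ^d, |x^*y|² = ⟨xx^*, yy^*⟩ where ⟨A,B⟩ = Re tr(A^*B); moreover, the squared Frobenius norm of the cross-Gramian G_{xy} (with entries ⟨xux^*, yvy^*⟩ for u,v ∈ {i,j,k}) equals 3|x^*y|⁴. -/

import Mathlib

open Matrix BigOperators

/-- The quaternion units `i, j, k`. -/
def qunit : Fin 3 → Quaternion ℝ := ![⟨0,1,0,0⟩, ⟨0,0,1,0⟩, ⟨0,0,0,1⟩]

/-- The matrix `x z x^*` for `x ∈ ℍ^d`, `z ∈ ℍ`. -/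
noncomputable def xzxStar {d : ℕ} (x : Fin d → Quaternion ℝ) (z : Quaternion ℝ) :
    Matrix (Fin d) (Fin d) (Quaternion ℝ) :=
  fun i j => x i * z * star (x j)

/-- The real inner product `⟨A,B⟩ = Re tr(A^*B)` on `ℍ^{d×d}`. -/
noncomputable def qmInner {d : ℕ} (A B : Matrix (Fin d) (Fin d) (Quaternion ℝ)) : ℝ :=
  (Matrix.trace (Aᴴ * B)).re

/-- The quaternionic inner product `x^*y = ∑ᵢ x̄ᵢ yᵢ`. -/
noncomputable def qvInner {d : ℕ} (x y : Fin d → Quaternion ℝ) : Quaternion ℝ :=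
  ∑ i, star (x i) * y i

/-- The rank-one matrix `x x^*`. -/
noncomputable def qRankOne {d : ℕ} (x : Fin d → Quaternion ℝ) :
    Matrix (Fin d) (Fin d) (Quaternion ℝ) :=
  fun i j => x i * star (x j)

/-- The `3×3` cross-Gramian of `S(x)` and `S(y)`. -/
noncomputable def crossGram {d : ℕ} (x y : Fin d → Quaternion ℝ) : Matrix (Fin 3) (Fin 3) ℝ :=
  fun a b => qmInner (xzxStar x (qunit a)) (xzxStar y (qunit b))


lemma re_sum {ι} (s : Finset ι) (f : ι → Quaternion ℝ) :
    (∑ i ∈ s, f i).re = ∑ i ∈ s, (f i).re :=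
  map_sum (QuaternionAlgebra.reₗ (-1:ℝ) (0:ℝ) (-1:ℝ)) f s

lemma re_cyc (a b : Quaternion ℝ) : (a*b).re = (b*a).re := by
  simp [Quaternion.re_mul]; ring

lemma key {d : ℕ} (x y : Fin d → Quaternion ℝ) (z w : Quaternion ℝ) :
    qmInner (xzxStar x z) (xzxStar y w)
      = (star (qvInner x y) * star z * qvInner x y * w).re := by
  have hstar : star (qvInner x y) = ∑ i, star (y i) * x i := by
    simp [qvInner, star_sum, StarMul.star_mul]
  unfold qmInner
  have expand : Matrix.trace ((xzxStar x z)ᴴ * xzxStar y w)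
      = ∑ i, ∑ j, (x i * star z * star (x j)) * (y j * w * star (y i)) := by
    simp [Matrix.trace, Matrix.diag, Matrix.mul_apply, Matrix.conjTranspose_apply,
      xzxStar, StarMul.star_mul, star_star, mul_assoc]
  rw [expand, hstar, qvInner]
  simp only [Finset.sum_mul, Finset.mul_sum, re_sum]
  rw [Finset.sum_comm]
  refine Finset.sum_congr rfl fun i _ => Finset.sum_congr rfl fun j _ => ?_
  simp only [← mul_assoc]
  rw [re_cyc (x j * star z * star (x i) * y i * w) (star (y j))]
  simp only [← mul_assoc]

lemma main_id (q : Quaternion ℝ) :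
    ∑ a : Fin 3, ∑ b : Fin 3, ((star q * star (qunit a) * q * qunit b).re)^2
      = 3 * (Quaternion.normSq q)^2 := by
  simp [qunit, Fin.sum_univ_three, Quaternion.normSq_def', Quaternion.re_mul,
    Quaternion.imI_mul, Quaternion.imJ_mul, Quaternion.imK_mul]
  ring

/-- For unit `x, y ∈ ℍ^d`: `|x^*y|² = ⟨xx^*, yy^*⟩`, and the squared Frobenius
norm of the cross-Gramian equals `3|x^*y|⁴`. -/
theorem cross_gram_frobenius (d : ℕ) (x y : Fin d → Quaternion ℝ)
    (hx : qvInner x x = 1) (hy : qvInner y y = 1) :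
    Quaternion.normSq (qvInner x y) = qmInner (qRankOne x) (qRankOne y) ∧
    (∑ a : Fin 3, ∑ b : Fin 3, (crossGram x y a b) ^ 2)
      = 3 * (Quaternion.normSq (qvInner x y)) ^ 2 := by
  have h1 : ∀ w : Fin d → Quaternion ℝ, qRankOne w = xzxStar w 1 := by
    intro w; funext i j; simp [qRankOne, xzxStar]
  constructor
  · rw [h1, h1, key]
    simp only [star_one, mul_one]
    rw [Quaternion.normSq_def, re_cyc]
  · simp only [crossGram, key]
    exact main_id _
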